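/- arXiv:1304.1222 — 2 statements merged into one kernel-verified Lean document; each statement's English description precedes it below -/
import Mathlib

section
/- Kantorovich bound for steepest descent: Let A be Hermitian positive definite with smallest and largest eigenvalues λ_min and λ_max, let x⋆ = A^{-1} y, and given t ≠ x⋆ let z = y − A t and x = t + h z with optimal step h = (z,z)/(z,Az). Then ‖x⋆ − x‖_A ≤ Ω(A) ‖x⋆ − t‖_A where Ω(A) = (λ_max − λ_min)/(λ_max + λ_min) < 1. -/
open Matrix
open scoped ComplexOrder

lemma herm_dot_conj {n : ℕ} {M : Matrix (Fin n) (Fin n) ℂ} (hM : M.IsHermitian) (x : Fin n → ℂ) :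
    (starRingEnd ℂ) (star x ⬝ᵥ M *ᵥ x) = star x ⬝ᵥ M *ᵥ x := by
  calc (starRingEnd ℂ) (star x ⬝ᵥ M *ᵥ x) = star (M *ᵥ x) ⬝ᵥ x := (star_dotProduct _ _).symm
    _ = (star x ᵥ* Mᴴ) ⬝ᵥ x := by rw [star_mulVec]
    _ = star x ⬝ᵥ M *ᵥ x := by rw [hM.eq, ← dotProduct_mulVec]

lemma herm_dot_real {n : ℕ} {M : Matrix (Fin n) (Fin n) ℂ} (hM : M.IsHermitian) (x : Fin n → ℂ) :
    star x ⬝ᵥ M *ᵥ x = (((star x ⬝ᵥ M *ᵥ x).re : ℝ) : ℂ) :=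
  (Complex.conj_eq_iff_re.mp (herm_dot_conj hM x)).symm

lemma sandwich {n : ℕ} (B C : Matrix (Fin n) (Fin n) ℂ) (hB : B.IsHermitian) (x : Fin n → ℂ) :
    star x ⬝ᵥ (B * C * B) *ᵥ x = star (B *ᵥ x) ⬝ᵥ C *ᵥ (B *ᵥ x) := by
  simp only [star_mulVec, hB.eq, dotProduct_mulVec, ← mulVec_mulVec, vecMul_vecMul]

section
open scoped MatrixOrder

noncomputable def Matrix.PosSemidef.sqrt {n : ℕ} {M : Matrix (Fin n) (Fin n) ℂ}
    (_hM : M.PosSemidef) : Matrix (Fin n) (Fin n) ℂ := CFC.sqrt M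

lemma Matrix.PosSemidef.sqrt_mul_self {n : ℕ} {M : Matrix (Fin n) (Fin n) ℂ}
    (hM : M.PosSemidef) : hM.sqrt * hM.sqrt = M :=
  CFC.sqrt_mul_sqrt_self M hM.nonneg

lemma Matrix.PosSemidef.posSemidef_sqrt {n : ℕ} {M : Matrix (Fin n) (Fin n) ℂ}
    (hM : M.PosSemidef) : hM.sqrt.PosSemidef :=
  (CFC.sqrt_nonneg M).posSemidef

end

lemma sqrt_comm {n : ℕ} {M : Matrix (Fin n) (Fin n) ℂ} (hM : M.PosSemidef) :
    hM.sqrt * M = M * hM.sqrt := by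
  calc hM.sqrt * M = hM.sqrt * (hM.sqrt * hM.sqrt) := by rw [hM.sqrt_mul_self]
    _ = (hM.sqrt * hM.sqrt) * hM.sqrt := by rw [mul_assoc]
    _ = M * hM.sqrt := by rw [hM.sqrt_mul_self]

/-- `A(A - a)(b - A)` has nonneg quadratic form when spectrum is in `[a,b]`. -/
lemma key_nonneg {n : ℕ} {A : Matrix (Fin n) (Fin n) ℂ} (hA : A.PosDef) {a b : ℝ}
    (hlow : ∀ v : Fin n → ℂ, a * (star v ⬝ᵥ v).re ≤ (star v ⬝ᵥ A *ᵥ v).re)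
    (hhigh : ∀ v : Fin n → ℂ, (star v ⬝ᵥ A *ᵥ v).re ≤ b * (star v ⬝ᵥ v).re)
    (e : Fin n → ℂ) :
    0 ≤ (star e ⬝ᵥ (((A - (a:ℂ) • 1) * (((b:ℂ) • 1 - A) * A)) *ᵥ e)).re := by
  set M : Matrix (Fin n) (Fin n) ℂ := A - (a:ℂ) • 1 with hMdef
  set N : Matrix (Fin n) (Fin n) ℂ := (b:ℂ) • 1 - A with hNdef
  have hone : ((a:ℂ) • (1 : Matrix (Fin n) (Fin n) ℂ)).IsHermitian := by
    unfold Matrix.IsHermitian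
    simp [conjTranspose_smul, Complex.conj_ofReal]
  have honeb : ((b:ℂ) • (1 : Matrix (Fin n) (Fin n) ℂ)).IsHermitian := by
    unfold Matrix.IsHermitian
    simp [conjTranspose_smul, Complex.conj_ofReal]
  have hMh : M.IsHermitian := hA.1.sub hone
  have hNh : N.IsHermitian := honeb.sub hA.1
  have hMform : ∀ x : Fin n → ℂ, (star x ⬝ᵥ M *ᵥ x).re
      = (star x ⬝ᵥ A *ᵥ x).re - a * (star x ⬝ᵥ x).re := by
    intro x
    rw [hMdef, sub_mulVec, dotProduct_sub, smul_mulVec, one_mulVec, dotProduct_smul]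
    simp
  have hNform : ∀ x : Fin n → ℂ, (star x ⬝ᵥ N *ᵥ x).re
      = b * (star x ⬝ᵥ x).re - (star x ⬝ᵥ A *ᵥ x).re := by
    intro x
    rw [hNdef, sub_mulVec, dotProduct_sub, smul_mulVec, one_mulVec, dotProduct_smul]
    simp
  have hM : M.PosSemidef := by
    refine PosSemidef.of_dotProduct_mulVec_nonneg hMh fun x => ?_
    rw [Complex.nonneg_iff]
    refine ⟨?_, ?_⟩
    · rw [hMform x]; linarith [hlow x]
    · exact (Complex.conj_eq_iff_im.mp (herm_dot_conj hMh x)).symm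
  have hN : N.PosSemidef := by
    refine PosSemidef.of_dotProduct_mulVec_nonneg hNh fun x => ?_
    rw [Complex.nonneg_iff]
    constructor
    · rw [hNform x]; linarith [hhigh x]
    · exact (Complex.conj_eq_iff_im.mp (herm_dot_conj hNh x)).symm
  set R := hM.sqrt with hRdef
  set T := hN.sqrt with hTdef
  have hRM : R * M = M * R := sqrt_comm hM
  have hTN : T * N = N * T := sqrt_comm hN
  have hRA : R * A = A * R := by
    have h1 : A = M + (a:ℂ) • 1 := by rw [hMdef]; abel
    rw [h1, mul_add, add_mul, hRM, mul_smul_comm, smul_mul_assoc, mul_one, one_mul]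
  have hTA : T * A = A * T := by
    have h1 : A = (b:ℂ) • 1 - N := by rw [hNdef]; abel
    rw [h1, mul_sub, sub_mul, hTN, mul_smul_comm, smul_mul_assoc, mul_one, one_mul]
  have hRN : R * N = N * R := by
    rw [hNdef, mul_sub, sub_mul, hRA, mul_smul_comm, smul_mul_assoc, mul_one, one_mul]
  -- M * (N * A) = R * (N * A) * R
  have hcomm : R * (N * A) = (N * A) * R := by
    rw [← mul_assoc, hRN, mul_assoc, hRA, ← mul_assoc]
  have hfact : M * (N * A) = R * (N * A) * R := by
    calc M * (N * A) = (R * R) * (N * A) := by rw [hM.sqrt_mul_self]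
      _ = R * (R * (N * A)) := mul_assoc _ _ _
      _ = R * ((N * A) * R) := by rw [hcomm]
      _ = R * (N * A) * R := (mul_assoc _ _ _).symm
  have hfact2 : N * A = T * A * T := by
    calc N * A = (T * T) * A := by rw [hN.sqrt_mul_self]
      _ = T * (T * A) := by rw [mul_assoc]
      _ = T * (A * T) := by rw [hTA]
      _ = T * A * T := by rw [mul_assoc]
  rw [hfact, sandwich _ _ hM.posSemidef_sqrt.1]
  rw [hfact2, sandwich _ _ hN.posSemidef_sqrt.1]
  exact hA.posSemidef.re_dotProduct_nonneg _

lemma star_self_re_nonneg {n : ℕ} (v : Fin n → ℂ) : 0 ≤ (star v ⬝ᵥ v).re := by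
  simp only [dotProduct, Pi.star_apply, Complex.re_sum]
  refine Finset.sum_nonneg fun i _ => ?_
  rw [mul_comm, RCLike.star_def, Complex.mul_conj]
  simp [Complex.normSq_nonneg]

/-- Kantorovich bound for one steepest descent step: with spectrum of `A` in
`[lmin, lmax]`, the optimal step `x = t + h z`, `h = (z,z)/(z,Az)`, satisfies
`‖x⋆ − x‖_A ≤ Ω(A) ‖x⋆ − t‖_A` with `Ω(A) = (lmax − lmin)/(lmax + lmin) < 1`. -/
theorem steepest_descent_kantorovich
    (n : ℕ) (A : Matrix (Fin n) (Fin n) ℂ)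
    (hA : A.PosDef)
    (lmin lmax : ℝ) (hlmin : 0 < lmin) (hle : lmin ≤ lmax)
    (hlow : ∀ v : Fin n → ℂ, lmin * (star v ⬝ᵥ v).re ≤ (star v ⬝ᵥ A *ᵥ v).re)
    (hhigh : ∀ v : Fin n → ℂ, (star v ⬝ᵥ A *ᵥ v).re ≤ lmax * (star v ⬝ᵥ v).re)
    (y xstar t : Fin n → ℂ)
    (hxstar : A *ᵥ xstar = y)
    (hne : t ≠ xstar) :
    let z := y - A *ᵥ t
    let h := (star z ⬝ᵥ z) / (star z ⬝ᵥ A *ᵥ z)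
    let x := t + h • z
    Real.sqrt (star (xstar - x) ⬝ᵥ A *ᵥ (xstar - x)).re
      ≤ (lmax - lmin) / (lmax + lmin)
        * Real.sqrt (star (xstar - t) ⬝ᵥ A *ᵥ (xstar - t)).re ∧
    (lmax - lmin) / (lmax + lmin) < 1 := by
  intro z hh x
  have hspos : 0 < lmax + lmin := by linarith
  set e := xstar - t with hedef
  have he : e ≠ 0 := sub_ne_zero.mpr (Ne.symm hne)
  have hz : z = A *ᵥ e := by
    show y - A *ᵥ t = A *ᵥ e
    rw [hedef, mulVec_sub, hxstar]
  set αr := (star e ⬝ᵥ A *ᵥ e).re with hαrdef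
  have hαpos : 0 < αr := hA.re_dotProduct_pos he
  have hzne : A *ᵥ e ≠ 0 := by
    intro h0
    have h1 : (star e ⬝ᵥ A *ᵥ e).re = 0 := by rw [h0]; simp
    rw [← hαrdef] at h1
    linarith
  have hA2 : (A * A).IsHermitian := by
    unfold Matrix.IsHermitian
    rw [conjTranspose_mul, hA.1.eq]
  have hA3 : (A * (A * A)).IsHermitian := by
    unfold Matrix.IsHermitian
    rw [conjTranspose_mul, hA2.eq, hA.1.eq, mul_assoc]
  set βc := star e ⬝ᵥ (A * A) *ᵥ e with hβcdef
  set γc := star e ⬝ᵥ (A * (A * A)) *ᵥ e with hγcdef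
  set βr := βc.re with hβrdef
  set γr := γc.re with hγrdef
  have hβreal : βc = (βr : ℂ) := herm_dot_real hA2 e
  have hγreal : γc = (γr : ℂ) := herm_dot_real hA3 e
  have hαreal : star e ⬝ᵥ A *ᵥ e = (αr : ℂ) := herm_dot_real hA.1 e
  have hd1 : star (A *ᵥ e) ⬝ᵥ (A *ᵥ e) = βc := by
    rw [hβcdef]
    simp only [star_mulVec, hA.1.eq, dotProduct_mulVec, vecMul_vecMul]
  have hd2 : star (A *ᵥ e) ⬝ᵥ A *ᵥ (A *ᵥ e) = γc := by
    rw [hγcdef, ← mul_assoc]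
    simp only [star_mulVec, hA.1.eq, dotProduct_mulVec, vecMul_vecMul]
  have hd3 : star e ⬝ᵥ A *ᵥ (A *ᵥ e) = βc := by
    rw [hβcdef]
    simp only [dotProduct_mulVec, vecMul_vecMul]
  have hd4 : star (A *ᵥ e) ⬝ᵥ A *ᵥ e = βc := by
    rw [hβcdef]
    simp only [star_mulVec, hA.1.eq, dotProduct_mulVec, vecMul_vecMul]
  have hγpos : 0 < γr := by
    have h1 := hA.re_dotProduct_pos hzne
    rw [hd2] at h1
    exact h1
  have hβr0 : 0 ≤ βr := by
    rw [hβrdef, ← hd1]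
    exact star_self_re_nonneg _
  have hγne : (γr : ℂ) ≠ 0 := by exact_mod_cast hγpos.ne'
  have hhval : hh = ((βr / γr : ℝ) : ℂ) := by
    show (star z ⬝ᵥ z) / (star z ⬝ᵥ A *ᵥ z) = _
    rw [hz, hd1, hd2, hβreal, hγreal, Complex.ofReal_div]
  have hxe : xstar - x = e - hh • (A *ᵥ e) := by
    show xstar - (t + hh • z) = e - hh • (A *ᵥ e)
    rw [hz, hedef, sub_add_eq_sub_sub]
  have hQ : star (xstar - x) ⬝ᵥ A *ᵥ (xstar - x) = ((αr - βr * βr / γr : ℝ) : ℂ) := by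
    rw [hxe, star_sub, star_smul, sub_dotProduct, mulVec_sub, mulVec_smul,
      dotProduct_sub, dotProduct_sub, smul_dotProduct, smul_dotProduct,
      dotProduct_smul, dotProduct_smul, hd2, hd3, hd4, hαreal, hβreal, hγreal, hhval]
    simp only [smul_eq_mul, RCLike.star_def, Complex.conj_ofReal]
    push_cast
    field_simp
    ring
  -- Kantorovich via key_nonneg
  have hkey := key_nonneg hA hlow hhigh e
  have hexp : (A - (lmin : ℂ) • 1) * (((lmax : ℂ) • 1 - A) * A)
      = ((lmin : ℂ) + lmax) • (A * A) - A * (A * A) - ((lmin : ℂ) * lmax) • A := by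
    simp only [mul_sub, sub_mul, smul_mul_assoc, mul_smul_comm, mul_one, one_mul, smul_smul]
    module
  have hkey2 : 0 ≤ (lmin + lmax) * βr - γr - lmin * lmax * αr := by
    rw [hexp] at hkey
    rw [sub_mulVec, sub_mulVec, dotProduct_sub, dotProduct_sub, smul_mulVec,
      smul_mulVec, dotProduct_smul, dotProduct_smul, ← hβcdef, ← hγcdef,
      hαreal, hβreal, hγreal] at hkey
    simp only [smul_eq_mul] at hkey
    have : ((((lmin : ℂ) + lmax) * βr - γr - (lmin : ℂ) * lmax * αr)).re
        = (lmin + lmax) * βr - γr - lmin * lmax * αr := by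
      push_cast
      simp
    rw [this] at hkey
    exact hkey
  set Ω := (lmax - lmin) / (lmax + lmin) with hΩdef
  have hΩ0 : 0 ≤ Ω := div_nonneg (by linarith) (by linarith)
  have hnum : 4 * lmin * lmax * αr * γr ≤ ((lmin + lmax) * βr) ^ 2 := by
    have h1 : γr + lmin * lmax * αr ≤ (lmin + lmax) * βr := by linarith
    have h2 : 0 ≤ γr + lmin * lmax * αr := by
      have hp := mul_pos (mul_pos hlmin (lt_of_lt_of_le hlmin hle)) hαpos
      linarith
    nlinarith [pow_le_pow_left₀ h2 h1 2, sq_nonneg (γr - lmin * lmax * αr)]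
  have hkant : αr - βr * βr / γr ≤ Ω ^ 2 * αr := by
    rw [← sub_nonneg]
    have heq : Ω ^ 2 * αr - (αr - βr * βr / γr)
        = (((lmin + lmax) * βr) ^ 2 - 4 * lmin * lmax * αr * γr)
          / ((lmax + lmin) ^ 2 * γr) := by
      rw [hΩdef]
      field_simp
      ring
    rw [heq]
    exact div_nonneg (by linarith) (mul_nonneg (by positivity) hγpos.le)
  constructor
  · calc Real.sqrt (star (xstar - x) ⬝ᵥ A *ᵥ (xstar - x)).re
        ≤ Real.sqrt (Ω ^ 2 * αr) := by
          apply Real.sqrt_le_sqrt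
          rw [hQ, Complex.ofReal_re]
          exact hkant
      _ = Ω * Real.sqrt αr := by
          rw [Real.sqrt_mul (sq_nonneg Ω), Real.sqrt_sq hΩ0]
  · rw [hΩdef, div_lt_one hspos]
    linarith
end

section
/- Two-dimensional AMEn progress estimate: Let A be Hermitian positive definite, x⋆ = A^{-1} y, and let t, u be vectors with ‖x⋆ − u‖_A ≤ ‖x⋆ − t‖_A and u ≠ x⋆. Let Z, X be full-column-rank matrices with u ∈ span(X) and span(Z) ⊆ span(X), and let x = X (X* A X)^{-1} X* y. Then ‖x⋆ − x‖_A² / ‖x⋆ − t‖_A² = μ² ω_X² with μ = ‖x⋆ − u‖_A/‖x⋆ − t‖_A ≤ 1 and ω_X² = 1 − (x⋆−u, R_X(x⋆−u))_A/‖x⋆−u‖_A², and moreover ω_X ≤ ω_Z where ω_Z² = 1 − (x⋆−u, R_Z(x⋆−u))_A/‖x⋆−u‖_A². -/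
open Matrix
open scoped ComplexOrder

section Aux
variable {n r : ℕ}

lemma aux_star_dot {n : ℕ} (M : Matrix (Fin n) (Fin n) ℂ) (v u : Fin n → ℂ) :
    star (M *ᵥ v) ⬝ᵥ u = star v ⬝ᵥ (Mᴴ *ᵥ u) := by
  rw [Matrix.star_mulVec, Matrix.dotProduct_mulVec]

lemma aux_AR (A : Matrix (Fin n) (Fin n) ℂ) (hA : Aᴴ = A)
    (S : Matrix (Fin n) (Fin r) ℂ) [Invertible (Sᴴ * A * S)] :
    (S * (Sᴴ * A * S)⁻¹ * Sᴴ * A)ᴴ * A = A * (S * (Sᴴ * A * S)⁻¹ * Sᴴ * A) := by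
  have hG : (Sᴴ * A * S)ᴴ = Sᴴ * A * S := by
    simp [Matrix.conjTranspose_mul, hA, Matrix.mul_assoc]
  calc (S * (Sᴴ * A * S)⁻¹ * Sᴴ * A)ᴴ * A
      = Aᴴ * (S * ((Sᴴ * A * S)ᴴ⁻¹ * (Sᴴ * A))) := by
        simp only [Matrix.conjTranspose_mul, Matrix.conjTranspose_nonsing_inv,
          Matrix.conjTranspose_conjTranspose, Matrix.mul_assoc]
    _ = A * (S * (Sᴴ * A * S)⁻¹ * Sᴴ * A) := by
        rw [hG, hA]; simp only [Matrix.mul_assoc]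

lemma aux_ip_move (A : Matrix (Fin n) (Fin n) ℂ) (hA : Aᴴ = A)
    (S : Matrix (Fin n) (Fin r) ℂ) [Invertible (Sᴴ * A * S)] (v w : Fin n → ℂ) :
    star ((S * (Sᴴ * A * S)⁻¹ * Sᴴ * A) *ᵥ v) ⬝ᵥ A *ᵥ w
      = star v ⬝ᵥ A *ᵥ ((S * (Sᴴ * A * S)⁻¹ * Sᴴ * A) *ᵥ w) := by
  rw [aux_star_dot, Matrix.mulVec_mulVec, aux_AR A hA S, ← Matrix.mulVec_mulVec]

lemma aux_RS (A : Matrix (Fin n) (Fin n) ℂ)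
    (S : Matrix (Fin n) (Fin r) ℂ) [Invertible (Sᴴ * A * S)] :
    (S * (Sᴴ * A * S)⁻¹ * Sᴴ * A) * S = S := by
  calc (S * (Sᴴ * A * S)⁻¹ * Sᴴ * A) * S
      = S * ((Sᴴ * A * S)⁻¹ * (Sᴴ * A * S)) := by simp only [Matrix.mul_assoc]
    _ = S := by rw [Matrix.inv_mul_of_invertible, Matrix.mul_one]

lemma aux_idem (A : Matrix (Fin n) (Fin n) ℂ)
    (S : Matrix (Fin n) (Fin r) ℂ) [Invertible (Sᴴ * A * S)] :
    (S * (Sᴴ * A * S)⁻¹ * Sᴴ * A) * (S * (Sᴴ * A * S)⁻¹ * Sᴴ * A)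
      = S * (Sᴴ * A * S)⁻¹ * Sᴴ * A := by
  calc (S * (Sᴴ * A * S)⁻¹ * Sᴴ * A) * (S * (Sᴴ * A * S)⁻¹ * Sᴴ * A)
      = ((S * (Sᴴ * A * S)⁻¹ * Sᴴ * A) * S) * ((Sᴴ * A * S)⁻¹ * (Sᴴ * A)) := by
        simp only [Matrix.mul_assoc]
    _ = _ := by rw [aux_RS]; simp only [Matrix.mul_assoc]

end Aux

/-- Two-dimensional AMEn progress estimate:
`‖x⋆ − x‖_A²/‖x⋆ − t‖_A² = μ² ω_X²` with `μ ≤ 1` and `ω_X ≤ ω_Z`. -/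
theorem amen_two_dimensional_progress
    (n rz rx : ℕ) (A : Matrix (Fin n) (Fin n) ℂ)
    (Z : Matrix (Fin n) (Fin rz) ℂ) (X : Matrix (Fin n) (Fin rx) ℂ)
    (hA : A.PosDef)
    (hZ : Function.Injective Z.mulVec)
    (hX : Function.Injective X.mulVec)
    (hInvZ : Invertible (Zᴴ * A * Z))
    (hInvX : Invertible (Xᴴ * A * X))
    (hspan : ∃ M : Matrix (Fin rx) (Fin rz) ℂ, Z = X * M)
    (y xstar t u : Fin n → ℂ)
    (hxstar : A *ᵥ xstar = y)
    (hu : ∃ s : Fin rx → ℂ, u = X *ᵥ s)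
    (hprog : Real.sqrt (star (xstar - u) ⬝ᵥ A *ᵥ (xstar - u)).re
      ≤ Real.sqrt (star (xstar - t) ⬝ᵥ A *ᵥ (xstar - t)).re)
    (hne : u ≠ xstar) :
    let RZ := Z * (Zᴴ * A * Z)⁻¹ * Zᴴ * A
    let RX := X * (Xᴴ * A * X)⁻¹ * Xᴴ * A
    let x := X *ᵥ ((Xᴴ * A * X)⁻¹ *ᵥ (Xᴴ *ᵥ y))
    let c := xstar - u
    let mu := Real.sqrt (star c ⬝ᵥ A *ᵥ c).re
      / Real.sqrt (star (xstar - t) ⬝ᵥ A *ᵥ (xstar - t)).re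
    let omX := Real.sqrt (1 - (star c ⬝ᵥ A *ᵥ (RX *ᵥ c)).re / (star c ⬝ᵥ A *ᵥ c).re)
    let omZ := Real.sqrt (1 - (star c ⬝ᵥ A *ᵥ (RZ *ᵥ c)).re / (star c ⬝ᵥ A *ᵥ c).re)
    (star (xstar - x) ⬝ᵥ A *ᵥ (xstar - x)).re
        / (star (xstar - t) ⬝ᵥ A *ᵥ (xstar - t)).re
      = mu ^ 2 * omX ^ 2 ∧
    mu ≤ 1 ∧ omX ≤ omZ := by
  intro RZ RX x c mu omX omZ
  haveI := hInvX; haveI := hInvZ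
  obtain ⟨M, hM⟩ := hspan
  obtain ⟨s, hs⟩ := hu
  have hAh : Aᴴ = A := hA.1
  -- positivity
  have hc0 : c ≠ 0 := sub_ne_zero.mpr (Ne.symm hne)
  have hPpos : 0 < (star c ⬝ᵥ A *ᵥ c).re := hA.re_dotProduct_pos hc0
  have hDnn : 0 ≤ (star (xstar - t) ⬝ᵥ A *ᵥ (xstar - t)).re :=
    hA.posSemidef.re_dotProduct_nonneg _
  have hPD : (star c ⬝ᵥ A *ᵥ c).re ≤ (star (xstar - t) ⬝ᵥ A *ᵥ (xstar - t)).re :=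
    (Real.sqrt_le_sqrt_iff hDnn).mp hprog
  have hDpos : 0 < (star (xstar - t) ⬝ᵥ A *ᵥ (xstar - t)).re := lt_of_lt_of_le hPpos hPD
  -- abbreviations
  set dX := RX *ᵥ c with hdX
  set dZ := RZ *ᵥ c with hdZ
  -- projection facts
  have hXidem : RX *ᵥ dX = dX := by
    rw [hdX, Matrix.mulVec_mulVec, aux_idem]
  have hmoveX : ∀ v w : Fin n → ℂ,
      star (RX *ᵥ v) ⬝ᵥ A *ᵥ w = star v ⬝ᵥ A *ᵥ (RX *ᵥ w) :=
    fun v w => aux_ip_move A hAh X v w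
  have hmoveZ : ∀ v w : Fin n → ℂ,
      star (RZ *ᵥ v) ⬝ᵥ A *ᵥ w = star v ⬝ᵥ A *ᵥ (RZ *ᵥ w) :=
    fun v w => aux_ip_move A hAh Z v w
  have hRXdZ : RX *ᵥ dZ = dZ := by
    rw [hdZ, Matrix.mulVec_mulVec]
    have h1 : RX * Z = Z := by
      rw [hM, ← Matrix.mul_assoc, show RX * X = X from aux_RS A X]
    have h2 : RX * RZ = RZ := by
      show RX * (Z * (Zᴴ * A * Z)⁻¹ * Zᴴ * A) = _
      calc RX * (Z * (Zᴴ * A * Z)⁻¹ * Zᴴ * A)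
          = (RX * Z) * ((Zᴴ * A * Z)⁻¹ * (Zᴴ * A)) := by simp only [Matrix.mul_assoc]
        _ = Z * (Zᴴ * A * Z)⁻¹ * Zᴴ * A := by rw [h1]; simp only [Matrix.mul_assoc]
    rw [h2]
  -- inner product identities
  have e1 : star dX ⬝ᵥ A *ᵥ c = star c ⬝ᵥ A *ᵥ dX := hmoveX c c
  have e2 : star dX ⬝ᵥ A *ᵥ dX = star c ⬝ᵥ A *ᵥ dX := by
    rw [hmoveX c dX, hXidem]
  have hZidem : RZ *ᵥ dZ = dZ := by
    rw [hdZ, Matrix.mulVec_mulVec, aux_idem]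
  have e3 : star dZ ⬝ᵥ A *ᵥ dZ = star c ⬝ᵥ A *ᵥ dZ := by
    rw [hmoveZ c dZ, hZidem]
  have e4 : star dX ⬝ᵥ A *ᵥ dZ = star c ⬝ᵥ A *ᵥ dZ := by
    rw [hmoveX c dZ, hRXdZ]
  have e5 : star dZ ⬝ᵥ A *ᵥ dX = star c ⬝ᵥ A *ᵥ dZ := by
    have h1 : star (RX *ᵥ dZ) ⬝ᵥ A *ᵥ c = star dZ ⬝ᵥ A *ᵥ dX := hmoveX dZ c
    rw [hRXdZ] at h1
    rw [← h1, hmoveZ c c]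
  -- Pythagoras: ⟨c - dX, c - dX⟩ = ⟨c,c⟩ - ⟨c,dX⟩
  have pyth : star (c - dX) ⬝ᵥ A *ᵥ (c - dX)
      = star c ⬝ᵥ A *ᵥ c - star c ⬝ᵥ A *ᵥ dX := by
    simp only [star_sub, Matrix.mulVec_sub, sub_dotProduct, dotProduct_sub,
      e1, e2]
    ring
  have hQXle : (star c ⬝ᵥ A *ᵥ dX).re ≤ (star c ⬝ᵥ A *ᵥ c).re := by
    have h := hA.posSemidef.re_dotProduct_nonneg (c - dX)
    rw [pyth] at h
    simp only [map_sub, RCLike.re_to_complex] at h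
    linarith
  -- comparison of the two projections
  have hQZle : (star c ⬝ᵥ A *ᵥ dZ).re ≤ (star c ⬝ᵥ A *ᵥ dX).re := by
    have h := hA.posSemidef.re_dotProduct_nonneg (dX - dZ)
    have expand : star (dX - dZ) ⬝ᵥ A *ᵥ (dX - dZ)
        = star c ⬝ᵥ A *ᵥ dX - star c ⬝ᵥ A *ᵥ dZ := by
      simp only [star_sub, Matrix.mulVec_sub, sub_dotProduct, dotProduct_sub,
        e2, e3, e4, e5]
      ring
    rw [expand] at h
    simp only [map_sub, RCLike.re_to_complex] at h
    linarith
  -- the Galerkin solution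
  have hx : xstar - x = c - dX := by
    have hxval : x = RX *ᵥ xstar := by
      show x = (X * (Xᴴ * A * X)⁻¹ * Xᴴ * A) *ᵥ xstar
      simp only [x, ← Matrix.mulVec_mulVec, hxstar]
    have hRXu : RX *ᵥ u = u := by
      rw [hs, Matrix.mulVec_mulVec, aux_RS]
    have : RX *ᵥ xstar = dX + u := by
      have hxc : xstar = c + u := by simp [c]
      rw [hxc, Matrix.mulVec_add, hRXu, hdX]
    rw [hxval, this]
    simp only [c]
    abel
  -- goal 1
  have hnum : (star (xstar - x) ⬝ᵥ A *ᵥ (xstar - x)).re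
      = (star c ⬝ᵥ A *ᵥ c).re - (star c ⬝ᵥ A *ᵥ dX).re := by
    rw [hx, pyth, Complex.sub_re]
  refine ⟨?_, ?_, ?_⟩
  · have hmu2 : mu ^ 2 = (star c ⬝ᵥ A *ᵥ c).re
        / (star (xstar - t) ⬝ᵥ A *ᵥ (xstar - t)).re := by
      rw [show mu = Real.sqrt (star c ⬝ᵥ A *ᵥ c).re
        / Real.sqrt (star (xstar - t) ⬝ᵥ A *ᵥ (xstar - t)).re from rfl,
        div_pow, Real.sq_sqrt hPpos.le, Real.sq_sqrt hDnn]
    have homX2 : omX ^ 2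
        = 1 - (star c ⬝ᵥ A *ᵥ dX).re / (star c ⬝ᵥ A *ᵥ c).re := by
      rw [show omX = Real.sqrt (1 - (star c ⬝ᵥ A *ᵥ dX).re / (star c ⬝ᵥ A *ᵥ c).re)
        from rfl]
      rw [Real.sq_sqrt]
      have : (star c ⬝ᵥ A *ᵥ dX).re / (star c ⬝ᵥ A *ᵥ c).re ≤ 1 :=
        (div_le_one hPpos).mpr hQXle
      linarith
    rw [hnum, hmu2, homX2]
    have hP0 : (star c ⬝ᵥ A *ᵥ c).re ≠ 0 := hPpos.ne'
    have hD0 : (star (xstar - t) ⬝ᵥ A *ᵥ (xstar - t)).re ≠ 0 := hDpos.ne'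
    set P := (star c ⬝ᵥ A *ᵥ c).re
    set D := (star (xstar - t) ⬝ᵥ A *ᵥ (xstar - t)).re
    set Q := (star c ⬝ᵥ A *ᵥ dX).re
    field_simp

  · exact (div_le_one (Real.sqrt_pos.mpr hDpos)).mpr hprog
  · apply Real.sqrt_le_sqrt
    have : (star c ⬝ᵥ A *ᵥ dZ).re / (star c ⬝ᵥ A *ᵥ c).re
        ≤ (star c ⬝ᵥ A *ᵥ dX).re / (star c ⬝ᵥ A *ᵥ c).re :=
      (div_le_div_iff_of_pos_right hPpos).mpr hQZle
    linarith
end
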